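/- Let M be a finite dimensional graded module over the KLR algebra R(α) of type A_n and let i, j ∈ I with |i − j| = 1. For any words k_1, k_2 with k_1 * k_2 ∈ I^{α − 2α_i − α_j}, one has 2·dim(1_{k_1*(i,j,i)*k_2} M) = dim(1_{k_1*(j,i,i)*k_2} M) + dim(1_{k_1*(i,i,j)*k_2} M). -/

import Mathlib

open scoped BigOperators

/-- A word of length `d` in the index set `I = {1,…,n}` (encoded 0-based as `Fin n`). -/
abbrev Word (n d : ℕ) := Fin d → Fin n

/-- The content of a word: the element of `Q⁺` it represents. -/
def wContent {n d : ℕ} (w : Word n d) : Fin n → ℕ :=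
  fun i => (Finset.univ.filter fun k => w k = i).card

/-- Entries of the type `A_n` Cartan matrix, on the 0-based indices. -/
def cartanA (a b : ℕ) : ℤ :=
  if a = b then 2 else if a + 1 = b ∨ b + 1 = a then -1 else 0

/-- Generators of the KLR algebra `R(α)` of type `A_n`: idempotents `1_w`, dots `x_k`,
crossings `τ_s` (the crossing `τ_s` acts on strands `s, s+1`, 0-based). -/
inductive KLRGen (n d : ℕ) : Type
  | e : Word n d → KLRGen n d
  | x : Fin d → KLRGen n d
  | t : Fin (d - 1) → KLRGen n d

abbrev KLRFree (n d : ℕ) := FreeAlgebra ℂ (KLRGen n d)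

def ge {n d : ℕ} (w : Word n d) : KLRFree n d := FreeAlgebra.ι ℂ (KLRGen.e w)
def gx {n d : ℕ} (k : Fin d) : KLRFree n d := FreeAlgebra.ι ℂ (KLRGen.x k)
def gt {n d : ℕ} (s : Fin (d - 1)) : KLRFree n d := FreeAlgebra.ι ℂ (KLRGen.t s)

/-- The left strand of the crossing `τ_s`. -/
def posl {d : ℕ} (s : Fin (d - 1)) : Fin d := ⟨s.1, by have := s.isLt; omega⟩
/-- The right strand of the crossing `τ_s`. -/
def posr {d : ℕ} (s : Fin (d - 1)) : Fin d := ⟨s.1 + 1, by have := s.isLt; omega⟩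

/-- The word with the entries at positions `s, s+1` exchanged. -/
def wswap {n d : ℕ} (s : Fin (d - 1)) (w : Word n d) : Word n d :=
  w ∘ Equiv.swap (posl s) (posr s)

/-- The defining relations of the KLR algebra `R(α)` of type `A_n`. -/
inductive KLRRel (n d : ℕ) (α : Fin n → ℕ) : KLRFree n d → KLRFree n d → Prop
  | unit : KLRRel n d α
      (∑ w ∈ Finset.univ.filter (fun w : Word n d => wContent w = α), ge w) 1
  | offblock (w : Word n d) : wContent w ≠ α → KLRRel n d α (ge w) 0
  | orth (w w' : Word n d) : w ≠ w' → KLRRel n d α (ge w * ge w') 0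
  | idem (w : Word n d) : KLRRel n d α (ge w * ge w) (ge w)
  | xe (k : Fin d) (w : Word n d) : KLRRel n d α (gx k * ge w) (ge w * gx k)
  | te (s : Fin (d - 1)) (w : Word n d) :
      KLRRel n d α (gt s * ge w) (ge (wswap s w) * gt s)
  | xx (k l : Fin d) : KLRRel n d α (gx k * gx l) (gx l * gx k)
  | ttfar (s s' : Fin (d - 1)) : s.1 + 1 < s'.1 ∨ s'.1 + 1 < s.1 →
      KLRRel n d α (gt s * gt s') (gt s' * gt s)
  | tsq (s : Fin (d - 1)) (w : Word n d) :
      KLRRel n d α (gt s * gt s * ge w)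
        (if w (posl s) = w (posr s) then 0
         else if cartanA (w (posl s)).1 (w (posr s)).1 = 0 then ge w
         else (gx (posl s) + gx (posr s)) * ge w)
  | braid (s s' : Fin (d - 1)) (h : s'.1 = s.1 + 1) (w : Word n d) :
      KLRRel n d α ((gt s * gt s' * gt s - gt s' * gt s * gt s') * ge w)
        (if w (posl s) = w (posr s') ∧ cartanA (w (posl s)).1 (w (posr s)).1 = -1
         then ge w else 0)
  | txk (s : Fin (d - 1)) (k : Fin d) (w : Word n d) :
      KLRRel n d α ((gt s * gx k - gx (Equiv.swap (posl s) (posr s) k) * gt s) * ge w)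
        (if k = posl s ∧ w (posl s) = w (posr s) then ge w
         else if k = posr s ∧ w (posl s) = w (posr s) then -(ge w) else 0)

/-- The Khovanov–Lauda–Rouquier algebra `R(α)` of type `A_n`, for `α ∈ Q⁺` of height `d`. -/
abbrev KLR (n d : ℕ) (α : Fin n → ℕ) := RingQuot (KLRRel n d α)

/-- The idempotent `1_w ∈ R(α)`. -/
noncomputable def Ew {n d : ℕ} (α : Fin n → ℕ) (w : Word n d) : KLR n d α :=
  RingQuot.mkAlgHom ℂ (KLRRel n d α) (ge w)
/-- The dot `x_k ∈ R(α)`. -/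
noncomputable def Xg {n d : ℕ} (α : Fin n → ℕ) (k : Fin d) : KLR n d α :=
  RingQuot.mkAlgHom ℂ (KLRRel n d α) (gx k)
/-- The crossing `τ_s ∈ R(α)`. -/
noncomputable def Tg {n d : ℕ} (α : Fin n → ℕ) (s : Fin (d - 1)) : KLR n d α :=
  RingQuot.mkAlgHom ℂ (KLRRel n d α) (gt s)

/-- A grading on an `R(α)`-module `M`, making it a graded module: a direct sum decomposition
into `ℂ`-subspaces such that the `1_w` preserve degrees, the dots raise degrees by `2` and
the crossings `τ_s 1_w` shift degrees by `−a_{w_s, w_{s+1}}`. -/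
structure KLRGrading (n d : ℕ) (α : Fin n → ℕ) (M : Type*) [AddCommGroup M] [Module ℂ M]
    [Module (KLR n d α) M] : Type _ where
  piece : ℤ → Submodule ℂ M
  internal : DirectSum.IsInternal piece
  e_stable : ∀ (w : Word n d) (i : ℤ), ∀ m ∈ piece i, Ew α w • m ∈ piece i
  x_shift : ∀ (k : Fin d) (i : ℤ), ∀ m ∈ piece i, Xg α k • m ∈ piece (i + 2)
  t_shift : ∀ (s : Fin (d - 1)) (w : Word n d) (i : ℤ), ∀ m ∈ piece i,
      (Tg α s * Ew α w) • m ∈ piece (i - cartanA (w (posl s)).1 (w (posr s)).1)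

/-- The word space `1_w M` of an `R(α)`-module, as a `ℂ`-subspace. -/
noncomputable def wordSpace {n d : ℕ} (α : Fin n → ℕ) (w : Word n d) (M : Type*)
    [AddCommGroup M] [Module ℂ M] [Module (KLR n d α) M] : Submodule ℂ M :=
  Submodule.span ℂ (Set.range fun m : M => Ew α w • m)


section SerreAux

variable {n d : ℕ} {α : Fin n → ℕ}

lemma mkq {x y : KLRFree n d} (h : KLRRel n d α x y) :
    RingQuot.mkAlgHom ℂ (KLRRel n d α) x = RingQuot.mkAlgHom ℂ (KLRRel n d α) y :=
  RingQuot.mkAlgHom_rel ℂ h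

lemma Ew_idem (w : Word n d) : Ew α w * Ew α w = Ew α w := by
  unfold Ew
  rw [← map_mul]
  exact mkq (α := α) (KLRRel.idem w)

variable {M : Type*} [AddCommGroup M] [Module ℂ M] [Module (KLR n d α) M]
  [IsScalarTower ℂ (KLR n d α) M]

lemma klr_smul_comm (z : KLR n d α) (c : ℂ) (m : M) : z • c • m = c • z • m := by
  rw [← algebraMap_smul (KLR n d α) c m, ← mul_smul, ← Algebra.commutes, mul_smul,
    algebraMap_smul]

noncomputable def smulL (z : KLR n d α) (M : Type*) [AddCommGroup M] [Module ℂ M]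
    [Module (KLR n d α) M] [IsScalarTower ℂ (KLR n d α) M] : M →ₗ[ℂ] M where
  toFun m := z • m
  map_add' := smul_add z
  map_smul' c m := klr_smul_comm z c m

lemma wordSpace_eq_range (w : Word n d) :
    wordSpace α w M = LinearMap.range (smulL (Ew α w) M) := by
  have h : wordSpace α w M = Submodule.span ℂ (Set.range ⇑(smulL (Ew α w) M)) := rfl
  rw [h, ← LinearMap.coe_range, Submodule.span_eq]

lemma mem_wordSpace_iff (w : Word n d) (x : M) :
    x ∈ wordSpace α w M ↔ Ew α w • x = x := by
  rw [wordSpace_eq_range]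
  constructor
  · rintro ⟨m, rfl⟩
    show Ew α w • (Ew α w • m) = Ew α w • m
    rw [smul_smul, Ew_idem]
  · intro h
    exact ⟨x, h⟩

lemma fix_push {z : KLR n d α} {w w' : Word n d} (h : z * Ew α w = Ew α w' * z) {x : M}
    (hx : Ew α w • x = x) : Ew α w' • z • x = z • x := by
  have h1 : z • x = (Ew α w' * z) • x := by rw [← h, mul_smul, hx]
  rw [h1, ← mul_smul, ← mul_assoc, Ew_idem]

lemma smul_fix {z z' : KLR n d α} {w : Word n d} (h : z * Ew α w = z') {x : M}
    (hx : Ew α w • x = x) : z • x = z' • x := by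
  rw [← h, mul_smul, hx]

noncomputable def cornerMap (M : Type*) [AddCommGroup M] [Module ℂ M]
    [Module (KLR n d α) M] [IsScalarTower ℂ (KLR n d α) M] {w w' : Word n d}
    (z : KLR n d α) (hz : z * Ew α w = Ew α w' * z) :
    wordSpace α w M →ₗ[ℂ] wordSpace α w' M where
  toFun x := ⟨z • (x : M), by
    rw [mem_wordSpace_iff]
    exact fix_push hz ((mem_wordSpace_iff w (x : M)).1 x.2)⟩
  map_add' x y := Subtype.ext (by simp [smul_add])
  map_smul' c x := Subtype.ext (by simp [klr_smul_comm])

@[simp] lemma cornerMap_apply {w w' : Word n d}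
    (z : KLR n d α) (hz : z * Ew α w = Ew α w' * z) (x : wordSpace α w M) :
    (cornerMap M z hz x : M) = z • (x : M) := rfl

end SerreAux



section WordEntries

variable {n d : ℕ} {w : Word n d} {k₁ k₂ : List (Fin n)} {a b c : Fin n}

lemma word_len (h : List.ofFn w = k₁ ++ [a, b, c] ++ k₂) :
    d = k₁.length + 3 + k₂.length := by
  have hl := congrArg List.length h
  simp only [List.length_ofFn, List.length_append, List.length_cons, List.length_nil] at hl
  omega

lemma word_entry (h : List.ofFn w = k₁ ++ [a, b, c] ++ k₂) (q : Fin d) :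
    w q = if h1 : q.1 < k₁.length then k₁[q.1]
      else if h2 : q.1 = k₁.length then a
      else if h3 : q.1 = k₁.length + 1 then b
      else if h4 : q.1 = k₁.length + 2 then c
      else k₂[q.1 - (k₁.length + 3)]'(by
        have hlen := word_len h
        omega) := by
  have hlen := word_len h
  have hq : q.1 < (List.ofFn w).length := by simp
  have hself : w q = (List.ofFn w)[q.1]'hq := by
    rw [List.getElem_ofFn]
  rw [hself, List.getElem_of_eq h]
  have hlen3 : (k₁ ++ [a, b, c]).length = k₁.length + 3 := by
    simp only [List.length_append, List.length_cons, List.length_nil]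
  by_cases h1 : q.1 < k₁.length
  · rw [dif_pos h1]
    have h1' : q.1 < (k₁ ++ [a, b, c]).length := by omega
    rw [List.getElem_append_left h1', List.getElem_append_left h1]
  · rw [dif_neg h1]
    by_cases h2 : q.1 = k₁.length
    · rw [dif_pos h2]
      have h1' : q.1 < (k₁ ++ [a, b, c]).length := by omega
      rw [List.getElem_append_left h1',
        List.getElem_append_right (Nat.le_of_not_lt h1),
        getElem_congr_idx (by omega : q.1 - k₁.length = 0)]
      rfl
    · rw [dif_neg h2]
      by_cases h3 : q.1 = k₁.length + 1
      · rw [dif_pos h3]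
        have h1' : q.1 < (k₁ ++ [a, b, c]).length := by omega
        rw [List.getElem_append_left h1',
          List.getElem_append_right (Nat.le_of_not_lt h1),
          getElem_congr_idx (by omega : q.1 - k₁.length = 1)]
        rfl
      · rw [dif_neg h3]
        by_cases h4 : q.1 = k₁.length + 2
        · rw [dif_pos h4]
          have h1' : q.1 < (k₁ ++ [a, b, c]).length := by omega
          rw [List.getElem_append_left h1',
            List.getElem_append_right (Nat.le_of_not_lt h1),
            getElem_congr_idx (by omega : q.1 - k₁.length = 2)]
          rfl
        · rw [dif_neg h4]
          have h5 : (k₁ ++ [a, b, c]).length ≤ q.1 := by omega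
          rw [List.getElem_append_right h5,
            getElem_congr_idx (by omega : q.1 - (k₁ ++ [a, b, c]).length = q.1 - (k₁.length + 3))]

lemma word_entry_a (h : List.ofFn w = k₁ ++ [a, b, c] ++ k₂) (q : Fin d)
    (hq : q.1 = k₁.length) : w q = a := by
  rw [word_entry h q, dif_neg (by omega), dif_pos hq]

lemma word_entry_b (h : List.ofFn w = k₁ ++ [a, b, c] ++ k₂) (q : Fin d)
    (hq : q.1 = k₁.length + 1) : w q = b := by
  rw [word_entry h q, dif_neg (by omega), dif_neg (by omega), dif_pos hq]

lemma word_entry_c (h : List.ofFn w = k₁ ++ [a, b, c] ++ k₂) (q : Fin d)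
    (hq : q.1 = k₁.length + 2) : w q = c := by
  rw [word_entry h q, dif_neg (by omega), dif_neg (by omega), dif_neg (by omega), dif_pos hq]

lemma word_entry_eq {w' : Word n d} {a' b' c' : Fin n}
    (h : List.ofFn w = k₁ ++ [a, b, c] ++ k₂)
    (h' : List.ofFn w' = k₁ ++ [a', b', c'] ++ k₂) (q : Fin d)
    (hq1 : q.1 ≠ k₁.length) (hq2 : q.1 ≠ k₁.length + 1) (hq3 : q.1 ≠ k₁.length + 2) :
    w q = w' q := by
  rw [word_entry h q, word_entry h' q]
  by_cases h1 : q.1 < k₁.length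
  · rw [dif_pos h1, dif_pos h1]
  · rw [dif_neg h1, dif_neg h1, dif_neg hq1, dif_neg hq1, dif_neg hq2, dif_neg hq2,
      dif_neg hq3, dif_neg hq3]

lemma fin_ne_of_val_ne {m : ℕ} {x y : Fin m} (h : x.1 ≠ y.1) : x ≠ y :=
  fun hh => h (congrArg Fin.val hh)

end WordEntries

set_option maxHeartbeats 1000000 in
theorem serre_core {n d : ℕ} {α : Fin n → ℕ} (M : Type*) [AddCommGroup M] [Module ℂ M]
    [Module (KLR n d α) M] [IsScalarTower ℂ (KLR n d α) M] [FiniteDimensional ℂ M]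
    (w₁ w₂ w₃ : Word n d) (T U P Q R : KLR n d α)
    (b1 : T * Ew α w₁ = Ew α w₂ * T)
    (b2 : T * Ew α w₂ = Ew α w₁ * T)
    (b3 : T * Ew α w₃ = Ew α w₃ * T)
    (b4 : U * Ew α w₁ = Ew α w₃ * U)
    (b5 : U * Ew α w₃ = Ew α w₁ * U)
    (b6 : U * Ew α w₂ = Ew α w₂ * U)
    (xP : ∀ w, P * Ew α w = Ew α w * P)
    (xQ : ∀ w, Q * Ew α w = Ew α w * Q)
    (xR : ∀ w, R * Ew α w = Ew α w * R)
    (c1 : T * T * Ew α w₁ = (P + Q) * Ew α w₁)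
    (c2 : U * U * Ew α w₁ = (Q + R) * Ew α w₁)
    (c3 : T * T * Ew α w₂ = (P + Q) * Ew α w₂)
    (c4 : U * U * Ew α w₂ = 0)
    (c5 : T * T * Ew α w₃ = 0)
    (c6 : U * U * Ew α w₃ = (Q + R) * Ew α w₃)
    (d1 : T * U * T * Ew α w₁ = Ew α w₁ + U * T * U * Ew α w₁)
    (d2 : T * U * T * Ew α w₂ = U * T * U * Ew α w₂)
    (d3 : T * U * T * Ew α w₃ = U * T * U * Ew α w₃)
    (e1b : T * Q * Ew α w₁ = P * T * Ew α w₁)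
    (e1c : T * R * Ew α w₁ = R * T * Ew α w₁)
    (e1d : U * Q * Ew α w₁ = R * U * Ew α w₁)
    (e1f : U * P * Ew α w₁ = P * U * Ew α w₁)
    (e2a : U * Q * Ew α w₂ = Ew α w₂ + R * U * Ew α w₂)
    (e2b : U * R * Ew α w₂ = Q * U * Ew α w₂ - Ew α w₂)
    (e2c : U * P * Ew α w₂ = P * U * Ew α w₂)
    (e3a : T * P * Ew α w₃ = Ew α w₃ + Q * T * Ew α w₃)
    (e3b : T * Q * Ew α w₃ = P * T * Ew α w₃ - Ew α w₃)
    (e3c : T * R * Ew α w₃ = R * T * Ew α w₃) :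
    2 * Module.finrank ℂ (wordSpace α w₁ M) =
      Module.finrank ℂ (wordSpace α w₂ M) + Module.finrank ℂ (wordSpace α w₃ M) := by
  classical
  -- module-level movement lemmas
  have mT1 : ∀ x : M, Ew α w₁ • x = x → Ew α w₂ • T • x = T • x := fun x hx => fix_push b1 hx
  have mT2 : ∀ x : M, Ew α w₂ • x = x → Ew α w₁ • T • x = T • x := fun x hx => fix_push b2 hx
  have mT3 : ∀ x : M, Ew α w₃ • x = x → Ew α w₃ • T • x = T • x := fun x hx => fix_push b3 hx
  have mU1 : ∀ x : M, Ew α w₁ • x = x → Ew α w₃ • U • x = U • x := fun x hx => fix_push b4 hx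
  have mU3 : ∀ x : M, Ew α w₃ • x = x → Ew α w₁ • U • x = U • x := fun x hx => fix_push b5 hx
  have mU2 : ∀ x : M, Ew α w₂ • x = x → Ew α w₂ • U • x = U • x := fun x hx => fix_push b6 hx
  -- squares
  have mc1 : ∀ x : M, Ew α w₁ • x = x → T • T • x = P • x + Q • x := by
    intro x hx
    have h := smul_fix (M := M) c1 hx
    rw [← mul_smul, h, mul_smul, hx, add_smul]
  have mc2 : ∀ x : M, Ew α w₁ • x = x → U • U • x = Q • x + R • x := by
    intro x hx
    have h := smul_fix (M := M) c2 hx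
    rw [← mul_smul, h, mul_smul, hx, add_smul]
  have mc3 : ∀ x : M, Ew α w₂ • x = x → T • T • x = P • x + Q • x := by
    intro x hx
    have h := smul_fix (M := M) c3 hx
    rw [← mul_smul, h, mul_smul, hx, add_smul]
  have mc4 : ∀ x : M, Ew α w₂ • x = x → U • U • x = 0 := by
    intro x hx
    have h := smul_fix (M := M) c4 hx
    rw [← mul_smul, h, zero_smul]
  have mc5 : ∀ x : M, Ew α w₃ • x = x → T • T • x = 0 := by
    intro x hx
    have h := smul_fix (M := M) c5 hx
    rw [← mul_smul, h, zero_smul]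
  have mc6 : ∀ x : M, Ew α w₃ • x = x → U • U • x = Q • x + R • x := by
    intro x hx
    have h := smul_fix (M := M) c6 hx
    rw [← mul_smul, h, mul_smul, hx, add_smul]
  -- braid
  have md1 : ∀ x : M, Ew α w₁ • x = x → T • U • T • x = x + U • T • U • x := by
    intro x hx
    have h := smul_fix (M := M) d1 hx
    calc T • U • T • x = (T * U * T) • x := by rw [mul_smul, mul_smul]
      _ = (Ew α w₁ + U * T * U * Ew α w₁) • x := h
      _ = x + U • T • U • x := by
          rw [add_smul, mul_smul, mul_smul, mul_smul, hx]
  have md2 : ∀ x : M, Ew α w₂ • x = x → T • U • T • x = U • T • U • x := by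
    intro x hx
    have h := smul_fix (M := M) d2 hx
    calc T • U • T • x = (T * U * T) • x := by rw [mul_smul, mul_smul]
      _ = (U * T * U * Ew α w₂) • x := h
      _ = U • T • U • x := by rw [mul_smul, mul_smul, mul_smul, hx]
  have md3 : ∀ x : M, Ew α w₃ • x = x → T • U • T • x = U • T • U • x := by
    intro x hx
    have h := smul_fix (M := M) d3 hx
    calc T • U • T • x = (T * U * T) • x := by rw [mul_smul, mul_smul]
      _ = (U * T * U * Ew α w₃) • x := h
      _ = U • T • U • x := by rw [mul_smul, mul_smul, mul_smul, hx]
  -- dot-crossing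
  have me1b : ∀ x : M, Ew α w₁ • x = x → T • Q • x = P • T • x := by
    intro x hx
    have h := smul_fix (M := M) e1b hx
    rw [← mul_smul, h, mul_smul, mul_smul, hx]
  have me1c : ∀ x : M, Ew α w₁ • x = x → T • R • x = R • T • x := by
    intro x hx
    have h := smul_fix (M := M) e1c hx
    rw [← mul_smul, h, mul_smul, mul_smul, hx]
  have me1d : ∀ x : M, Ew α w₁ • x = x → U • Q • x = R • U • x := by
    intro x hx
    have h := smul_fix (M := M) e1d hx
    rw [← mul_smul, h, mul_smul, mul_smul, hx]
  have me1f : ∀ x : M, Ew α w₁ • x = x → U • P • x = P • U • x := by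
    intro x hx
    have h := smul_fix (M := M) e1f hx
    rw [← mul_smul, h, mul_smul, mul_smul, hx]
  have me2a : ∀ x : M, Ew α w₂ • x = x → U • Q • x = x + R • U • x := by
    intro x hx
    have h := smul_fix (M := M) e2a hx
    calc U • Q • x = (U * Q) • x := by rw [mul_smul]
      _ = (Ew α w₂ + R * U * Ew α w₂) • x := h
      _ = x + R • U • x := by rw [add_smul, mul_smul, mul_smul, hx]
  have me2b : ∀ x : M, Ew α w₂ • x = x → U • R • x = Q • U • x - x := by
    intro x hx
    have h := smul_fix (M := M) e2b hx
    rw [← mul_smul, h, sub_smul, mul_smul, mul_smul, hx]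
  have me2c : ∀ x : M, Ew α w₂ • x = x → U • P • x = P • U • x := by
    intro x hx
    have h := smul_fix (M := M) e2c hx
    rw [← mul_smul, h, mul_smul, mul_smul, hx]
  have me3a : ∀ x : M, Ew α w₃ • x = x → T • P • x = x + Q • T • x := by
    intro x hx
    have h := smul_fix (M := M) e3a hx
    calc T • P • x = (T * P) • x := by rw [mul_smul]
      _ = (Ew α w₃ + Q * T * Ew α w₃) • x := h
      _ = x + Q • T • x := by rw [add_smul, mul_smul, mul_smul, hx]
  have me3b : ∀ x : M, Ew α w₃ • x = x → T • Q • x = P • T • x - x := by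
    intro x hx
    have h := smul_fix (M := M) e3b hx
    rw [← mul_smul, h, sub_smul, mul_smul, mul_smul, hx]
  have me3c : ∀ x : M, Ew α w₃ • x = x → T • R • x = R • T • x := by
    intro x hx
    have h := smul_fix (M := M) e3c hx
    rw [← mul_smul, h, mul_smul, mul_smul, hx]
  -- the dot polynomials
  set A : KLR n d α := P + P + Q + R with hA
  set B : KLR n d α := P + Q + R + R with hB
  have hAcomm : ∀ w, A * Ew α w = Ew α w * A := by
    intro w
    simp only [hA, add_mul, mul_add, xP, xQ, xR]
  have hBcomm : ∀ w, B * Ew α w = Ew α w * B := by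
    intro w
    simp only [hB, add_mul, mul_add, xP, xQ, xR]
  have hAsmul : ∀ x : M, A • x = P • x + P • x + Q • x + R • x := by
    intro x; rw [hA, add_smul, add_smul, add_smul]
  have hBsmul : ∀ x : M, B • x = P • x + Q • x + R • x + R • x := by
    intro x; rw [hB, add_smul, add_smul, add_smul]
  have m_uA : ∀ x : M, Ew α w₂ • x = x → U • A • x = A • U • x := by
    intro x hx
    rw [hAsmul, hAsmul]
    rw [smul_add, smul_add, smul_add, me2c x hx, me2a x hx, me2b x hx]
    abel
  have m_tB : ∀ x : M, Ew α w₃ • x = x → T • B • x = B • T • x := by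
    intro x hx
    rw [hBsmul, hBsmul]
    rw [smul_add, smul_add, smul_add, me3a x hx, me3b x hx, me3c x hx]
    abel
  have mAfix : ∀ (w : Word n d) (x : M), Ew α w • x = x → Ew α w • A • x = A • x :=
    fun w x hx => fix_push (hAcomm w) hx
  have mBfix : ∀ (w : Word n d) (x : M), Ew α w • x = x → Ew α w • B • x = B • x :=
    fun w x hx => fix_push (hBcomm w) hx
  -- nilpotency lemmas
  have mz1 : ∀ x : M, Ew α w₂ • x = x → A • U • A • U • x = 0 := by
    intro x hx
    rw [m_uA _ (mU2 x hx), mc4 x hx]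
    simp only [smul_zero]
  have mz2 : ∀ x : M, Ew α w₃ • x = x → B • T • B • T • x = 0 := by
    intro x hx
    rw [m_tB _ (mT3 x hx), mc5 x hx]
    simp only [smul_zero]
  have mz5 : ∀ x : M, Ew α w₃ • x = x → U • T • U • T • x = 0 := by
    intro x hx
    rw [md3 x hx, mc4 _ (mT1 _ (mU3 x hx))]
  have mz6 : ∀ x : M, Ew α w₂ • x = x → T • U • T • U • x = 0 := by
    intro x hx
    rw [← md2 x hx, mc5 _ (mU1 _ (mT2 x hx))]
  have mz8 : ∀ x : M, Ew α w₂ • x = x → T • T • U • T • x = 0 := by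
    intro x hx
    exact mc5 _ (mU1 _ (mT2 x hx))
  have mz3 : ∀ x : M, Ew α w₂ • x = x → U • T • U • T • U • T • x = 0 := by
    intro x hx
    have hUx : Ew α w₂ • U • x = U • x := mU2 x hx
    have hz : Ew α w₁ • T • U • x = T • U • x := mT2 _ hUx
    rw [md2 x hx, mc2 _ hz, smul_add, smul_add, me1b _ hz, me1c _ hz]
    have hy' : Ew α w₂ • T • T • U • x = T • T • U • x := mT1 _ hz
    rw [me2c _ hy', me2b _ hy', mc3 _ hUx]
    rw [smul_add, me2c _ hUx, me2a _ hUx, mc4 x hx]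
    simp only [smul_zero, smul_add, smul_sub, zero_add, zero_sub, smul_neg]
    abel
  have mz4 : ∀ x : M, Ew α w₃ • x = x → T • U • T • U • T • U • x = 0 := by
    intro x hx
    have hTx : Ew α w₃ • T • x = T • x := mT3 x hx
    have hz : Ew α w₁ • U • T • x = U • T • x := mU3 _ hTx
    rw [← md3 x hx, mc1 _ hz, smul_add, smul_add, me1f _ hz, me1d _ hz]
    have hy' : Ew α w₃ • U • U • T • x = U • U • T • x := mU1 _ hz
    rw [me3a _ hy', me3c _ hy', mc6 _ hTx]
    rw [smul_add, me3b _ hTx, me3c _ hTx, mc5 x hx]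
    simp only [smul_zero, smul_add, smul_sub, zero_add, zero_sub, smul_neg]
    abel
  -- corner identities for the linear maps
  have hfUT : (U * T) * Ew α w₁ = Ew α w₂ * (U * T) := by
    rw [mul_assoc, b1, ← mul_assoc, b6, mul_assoc]
  have hfTU : (T * U) * Ew α w₁ = Ew α w₃ * (T * U) := by
    rw [mul_assoc, b4, ← mul_assoc, b3, mul_assoc]
  have hgTU : (T * U) * Ew α w₂ = Ew α w₁ * (T * U) := by
    rw [mul_assoc, b6, ← mul_assoc, b2, mul_assoc]
  have hgUT : (U * T) * Ew α w₃ = Ew α w₁ * (U * T) := by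
    rw [mul_assoc, b3, ← mul_assoc, b5, mul_assoc]
  have hN : (P - R) * Ew α w₁ = Ew α w₁ * (P - R) := by
    rw [sub_mul, xP, xR, mul_sub]
  have hXA : (A * U) * Ew α w₂ = Ew α w₂ * (A * U) := by
    rw [mul_assoc, b6, ← mul_assoc, hAcomm, mul_assoc]
  have hXB : (B * T) * Ew α w₃ = Ew α w₃ * (B * T) := by
    rw [mul_assoc, b3, ← mul_assoc, hBcomm, mul_assoc]
  have hUTU : (U * T * U) * Ew α w₃ = Ew α w₂ * (U * T * U) := by
    rw [mul_assoc, b5, ← mul_assoc, hfUT, mul_assoc]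
  have hTUT : (T * U * T) * Ew α w₂ = Ew α w₃ * (T * U * T) := by
    rw [mul_assoc, b2, ← mul_assoc, hfTU, mul_assoc]
  -- the linear maps
  set W₁ := wordSpace α w₁ M
  set W₂ := wordSpace α w₂ M
  set W₃ := wordSpace α w₃ M
  let fUT : W₁ →ₗ[ℂ] W₂ := cornerMap M (U * T) hfUT
  let fT : W₁ →ₗ[ℂ] W₂ := cornerMap M T b1
  let fTU : W₁ →ₗ[ℂ] W₃ := cornerMap M (T * U) hfTU
  let fU : W₁ →ₗ[ℂ] W₃ := cornerMap M U b4
  let gT : W₂ →ₗ[ℂ] W₁ := cornerMap M T b2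
  let gU : W₃ →ₗ[ℂ] W₁ := cornerMap M U b5
  let gTU : W₂ →ₗ[ℂ] W₁ := cornerMap M (T * U) hgTU
  let gUT : W₃ →ₗ[ℂ] W₁ := cornerMap M (U * T) hgUT
  let nN : W₁ →ₗ[ℂ] W₁ := cornerMap M (P - R) hN
  let xA : W₂ →ₗ[ℂ] W₂ := cornerMap M (A * U) hXA
  let xB : W₃ →ₗ[ℂ] W₃ := cornerMap M (B * T) hXB
  let xUTU : W₃ →ₗ[ℂ] W₂ := cornerMap M (U * T * U) hUTU
  let xTUT : W₂ →ₗ[ℂ] W₃ := cornerMap M (T * U * T) hTUT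
  let Fh : W₁ × W₁ →ₗ[ℂ] W₂ × W₃ :=
    LinearMap.prod
      (fUT.comp (LinearMap.fst ℂ W₁ W₁) + fT.comp (LinearMap.snd ℂ W₁ W₁))
      (fTU.comp (LinearMap.fst ℂ W₁ W₁) + fU.comp (LinearMap.snd ℂ W₁ W₁))
  let Gh : W₂ × W₃ →ₗ[ℂ] W₁ × W₁ :=
    LinearMap.prod
      (gT.comp (LinearMap.fst ℂ W₂ W₃) - gU.comp (LinearMap.snd ℂ W₂ W₃))
      (gTU.comp (LinearMap.fst ℂ W₂ W₃) - gUT.comp (LinearMap.snd ℂ W₂ W₃))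
  let Xh : W₂ × W₃ →ₗ[ℂ] W₂ × W₃ :=
    LinearMap.prod
      (xA.comp (LinearMap.fst ℂ W₂ W₃) - (2 : ℂ) • (xUTU.comp (LinearMap.snd ℂ W₂ W₃)))
      ((2 : ℂ) • (xTUT.comp (LinearMap.fst ℂ W₂ W₃)) - xB.comp (LinearMap.snd ℂ W₂ W₃))
  -- pointwise identities
  have hGhFh : ∀ x : W₁ × W₁, Gh (Fh x) = (x.1 + nN x.2, x.2) := by
    intro x
    have hx1 : Ew α w₁ • (x.1 : M) = (x.1 : M) := (mem_wordSpace_iff w₁ (x.1 : M)).1 x.1.2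
    have hx2 : Ew α w₁ • (x.2 : M) = (x.2 : M) := (mem_wordSpace_iff w₁ (x.2 : M)).1 x.2.2
    refine Prod.ext (Subtype.ext ?_) (Subtype.ext ?_)
    · show T • ((U * T) • (x.1 : M) + T • (x.2 : M))
          - U • ((T * U) • (x.1 : M) + U • (x.2 : M)) = (x.1 : M) + (P - R) • (x.2 : M)
      rw [mul_smul, mul_smul, smul_add, smul_add, md1 _ hx1, mc1 _ hx2, mc2 _ hx2, sub_smul]
      abel
    · show (T * U) • ((U * T) • (x.1 : M) + T • (x.2 : M))
          - (U * T) • ((T * U) • (x.1 : M) + U • (x.2 : M)) = (x.2 : M)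
      simp only [mul_smul, smul_add]
      rw [mc4 _ (mT1 _ hx1), mc5 _ (mU1 _ hx1), md1 _ hx2]
      simp only [smul_zero]
      abel
  have hFhGh : ∀ y : W₂ × W₃, Fh (Gh y) = y + Xh y := by
    intro y
    have hy1 : Ew α w₂ • (y.1 : M) = (y.1 : M) := (mem_wordSpace_iff w₂ (y.1 : M)).1 y.1.2
    have hy2 : Ew α w₃ • (y.2 : M) = (y.2 : M) := (mem_wordSpace_iff w₃ (y.2 : M)).1 y.2.2
    refine Prod.ext (Subtype.ext ?_) (Subtype.ext ?_)
    · show (U * T) • (T • (y.1 : M) - U • (y.2 : M))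
          + T • ((T * U) • (y.1 : M) - (U * T) • (y.2 : M))
          = ((y.1 : M) + ((A * U) • (y.1 : M) - (2 : ℂ) • (U * T * U) • (y.2 : M)))
      simp only [mul_smul, smul_sub]
      rw [mc3 _ hy1, smul_add, me2c _ hy1, me2a _ hy1, mc3 _ (mU2 _ hy1), md3 _ hy2]
      rw [hAsmul (U • (y.1 : M))]
      have h2 : ((2 : ℂ) • (U • T • U • (y.2 : M)) : M)
          = U • T • U • (y.2 : M) + U • T • U • (y.2 : M) := two_smul ℂ _
      rw [h2]
      abel
    · show (T * U) • (T • (y.1 : M) - U • (y.2 : M))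
          + U • ((T * U) • (y.1 : M) - (U * T) • (y.2 : M))
          = ((y.2 : M) + ((2 : ℂ) • (T * U * T) • (y.1 : M) - (B * T) • (y.2 : M)))
      simp only [mul_smul, smul_sub]
      rw [mc6 _ hy2, smul_add, me3b _ hy2, me3c _ hy2, mc6 _ (mT3 _ hy2), md2 _ hy1]
      rw [hBsmul (T • (y.2 : M))]
      rw [two_smul ℂ (U • T • U • (y.1 : M))]
      abel
  have hXhXh : ∀ y : W₂ × W₃, Xh (Xh y) = 0 := by
    intro y
    have hy1 : Ew α w₂ • (y.1 : M) = (y.1 : M) := (mem_wordSpace_iff w₂ (y.1 : M)).1 y.1.2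
    have hy2 : Ew α w₃ • (y.2 : M) = (y.2 : M) := (mem_wordSpace_iff w₃ (y.2 : M)).1 y.2.2
    refine Prod.ext (Subtype.ext ?_) (Subtype.ext ?_)
    · show (A * U) • ((A * U) • (y.1 : M) - (2 : ℂ) • (U * T * U) • (y.2 : M))
          - (2 : ℂ) • (U * T * U) •
              ((2 : ℂ) • (T * U * T) • (y.1 : M) - (B * T) • (y.2 : M)) = (0 : M)
      simp only [mul_smul, smul_sub, klr_smul_comm]
      rw [mz1 _ hy1, mz3 _ hy1, mc4 _ (mT1 _ (mU3 _ hy2))]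
      rw [show B • T • (y.2 : M) = T • B • (y.2 : M) from (m_tB _ hy2).symm]
      rw [mz5 _ (mBfix w₃ _ hy2)]
      simp only [smul_zero, sub_zero, zero_sub, neg_zero, sub_self]
    · show (2 : ℂ) • (T * U * T) •
              ((A * U) • (y.1 : M) - (2 : ℂ) • (U * T * U) • (y.2 : M))
          - (B * T) • ((2 : ℂ) • (T * U * T) • (y.1 : M) - (B * T) • (y.2 : M)) = (0 : M)
      simp only [mul_smul, smul_sub, klr_smul_comm]
      rw [show A • U • (y.1 : M) = U • A • (y.1 : M) from (m_uA _ hy1).symm]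
      rw [mz6 _ (mAfix w₂ _ hy1), mz4 _ hy2, mz8 _ hy1, mz2 _ hy2]
      simp only [smul_zero, sub_zero, zero_sub, neg_zero, sub_self]
  -- bijectivity of Fh
  have hinj : Function.Injective Fh := by
    intro x y hxy
    have h1 := hGhFh x
    rw [hxy, hGhFh y] at h1
    obtain ⟨h11, h12⟩ := Prod.ext_iff.1 h1
    simp only at h11 h12
    rw [h12] at h11
    exact Prod.ext (add_right_cancel h11).symm h12.symm
  have hsurj : Function.Surjective Fh := by
    intro y
    refine ⟨Gh (y - Xh y), ?_⟩
    rw [hFhGh (y - Xh y), map_sub, hXhXh y]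
    abel
  have equiv : (W₁ × W₁) ≃ₗ[ℂ] (W₂ × W₃) := LinearEquiv.ofBijective Fh ⟨hinj, hsurj⟩
  have hrk := equiv.finrank_eq
  rw [Module.finrank_prod, Module.finrank_prod] at hrk
  omega

/-- Let `M` be a finite dimensional graded module over the KLR algebra `R(α)`
of type `A_n` and `i, j ∈ I` with `|i − j| = 1`.  For any words `k₁, k₂` with
`k₁ * k₂ ∈ I^{α − 2α_i − α_j}`,
`2·dim (1_{k₁*(i,j,i)*k₂} M) = dim (1_{k₁*(j,i,i)*k₂} M) + dim (1_{k₁*(i,i,j)*k₂} M)`. -/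
theorem serre_adjacent_dim_eq (n d : ℕ) (α : Fin n → ℕ)
    (M : Type) [AddCommGroup M] [Module ℂ M] [Module (KLR n d α) M]
    [IsScalarTower ℂ (KLR n d α) M]
    (hgr : Nonempty (KLRGrading n d α M)) (hfd : FiniteDimensional ℂ M)
    (i j : Fin n) (hij : i.1 + 1 = j.1 ∨ j.1 + 1 = i.1)
    (k₁ k₂ : List (Fin n)) (w₁ w₂ w₃ : Word n d)
    (hw₁ : List.ofFn w₁ = k₁ ++ [i, j, i] ++ k₂)
    (hw₂ : List.ofFn w₂ = k₁ ++ [j, i, i] ++ k₂)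
    (hw₃ : List.ofFn w₃ = k₁ ++ [i, i, j] ++ k₂)
    (hc₁ : wContent w₁ = α) (hc₂ : wContent w₂ = α) (hc₃ : wContent w₃ = α) :
    2 * Module.finrank ℂ (wordSpace α w₁ M) =
      Module.finrank ℂ (wordSpace α w₂ M) + Module.finrank ℂ (wordSpace α w₃ M) := by
  classical
  haveI := hfd
  have hdlen : d = k₁.length + 3 + k₂.length := word_len hw₁
  have hvne : i.1 ≠ j.1 := by rcases hij with h | h <;> omega
  have hne : i ≠ j := fun hh => hvne (congrArg Fin.val hh)
  have hne' : j ≠ i := fun hh => hne hh.symm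
  have cij : cartanA i.1 j.1 = -1 := by
    unfold cartanA
    rw [if_neg hvne, if_pos hij]
  have cji : cartanA j.1 i.1 = -1 := by
    unfold cartanA
    rw [if_neg (Ne.symm hvne), if_pos hij.symm]
  have hs1lt : k₁.length < d - 1 := by omega
  have hs2lt : k₁.length + 1 < d - 1 := by omega
  let s₁ : Fin (d - 1) := ⟨k₁.length, hs1lt⟩
  let s₂ : Fin (d - 1) := ⟨k₁.length + 1, hs2lt⟩
  have hvl1 : (posl s₁).1 = k₁.length := rfl
  have hvr1 : (posr s₁).1 = k₁.length + 1 := rfl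
  have hvl2 : (posl s₂).1 = k₁.length + 1 := rfl
  have hvr2 : (posr s₂).1 = k₁.length + 2 := rfl
  -- entry values
  have w1a : w₁ (posl s₁) = i := word_entry_a hw₁ _ hvl1
  have w1b : w₁ (posr s₁) = j := word_entry_b hw₁ _ hvr1
  have w1b2 : w₁ (posl s₂) = j := word_entry_b hw₁ _ hvl2
  have w1c : w₁ (posr s₂) = i := word_entry_c hw₁ _ hvr2
  have w2a : w₂ (posl s₁) = j := word_entry_a hw₂ _ hvl1
  have w2b : w₂ (posr s₁) = i := word_entry_b hw₂ _ hvr1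
  have w2b2 : w₂ (posl s₂) = i := word_entry_b hw₂ _ hvl2
  have w2c : w₂ (posr s₂) = i := word_entry_c hw₂ _ hvr2
  have w3a : w₃ (posl s₁) = i := word_entry_a hw₃ _ hvl1
  have w3b : w₃ (posr s₁) = i := word_entry_b hw₃ _ hvr1
  have w3b2 : w₃ (posl s₂) = i := word_entry_b hw₃ _ hvl2
  have w3c : w₃ (posr s₂) = j := word_entry_c hw₃ _ hvr2
  -- position inequalities
  have ne_q_p : posr s₁ ≠ posl s₁ := fin_ne_of_val_ne (by rw [hvr1, hvl1]; omega)
  have ne_r_p : posr s₂ ≠ posl s₁ := fin_ne_of_val_ne (by rw [hvr2, hvl1]; omega)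
  have ne_r_q : posr s₂ ≠ posr s₁ := fin_ne_of_val_ne (by rw [hvr2, hvr1]; omega)
  have ne_p_lq : posl s₁ ≠ posl s₂ := fin_ne_of_val_ne (by rw [hvl1, hvl2]; omega)
  have ne_p_r : posl s₁ ≠ posr s₂ := fin_ne_of_val_ne (by rw [hvl1, hvr2]; omega)
  have ne_r_lq : posr s₂ ≠ posl s₂ := fin_ne_of_val_ne (by rw [hvr2, hvl2]; omega)
  -- swap facts
  have hsw1 : wswap s₁ w₁ = w₂ := by
    funext q
    show w₁ (Equiv.swap (posl s₁) (posr s₁) q) = w₂ q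
    by_cases hq1 : q = posl s₁
    · rw [hq1, Equiv.swap_apply_left, w1b, word_entry_a hw₂ _ hvl1]
    · by_cases hq2 : q = posr s₁
      · rw [hq2, Equiv.swap_apply_right, w1a, word_entry_b hw₂ _ hvr1]
      · rw [Equiv.swap_apply_of_ne_of_ne hq1 hq2]
        by_cases hq3 : q.1 = k₁.length + 2
        · rw [word_entry_c hw₁ q hq3, word_entry_c hw₂ q hq3]
        · exact word_entry_eq hw₁ hw₂ q
            (fun hh => hq1 (Fin.ext (hh.trans hvl1.symm)))
            (fun hh => hq2 (Fin.ext (hh.trans hvr1.symm))) hq3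
  have hsw1' : wswap s₁ w₂ = w₁ := by
    funext q
    show w₂ (Equiv.swap (posl s₁) (posr s₁) q) = w₁ q
    by_cases hq1 : q = posl s₁
    · rw [hq1, Equiv.swap_apply_left, w2b, word_entry_a hw₁ _ hvl1]
    · by_cases hq2 : q = posr s₁
      · rw [hq2, Equiv.swap_apply_right, w2a, word_entry_b hw₁ _ hvr1]
      · rw [Equiv.swap_apply_of_ne_of_ne hq1 hq2]
        by_cases hq3 : q.1 = k₁.length + 2
        · rw [word_entry_c hw₂ q hq3, word_entry_c hw₁ q hq3]
        · exact word_entry_eq hw₂ hw₁ q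
            (fun hh => hq1 (Fin.ext (hh.trans hvl1.symm)))
            (fun hh => hq2 (Fin.ext (hh.trans hvr1.symm))) hq3
  have hsw2 : wswap s₂ w₁ = w₃ := by
    funext q
    show w₁ (Equiv.swap (posl s₂) (posr s₂) q) = w₃ q
    by_cases hq1 : q = posl s₂
    · rw [hq1, Equiv.swap_apply_left, w1c, word_entry_b hw₃ _ hvl2]
    · by_cases hq2 : q = posr s₂
      · rw [hq2, Equiv.swap_apply_right, w1b2, word_entry_c hw₃ _ hvr2]
      · rw [Equiv.swap_apply_of_ne_of_ne hq1 hq2]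
        by_cases hq3 : q.1 = k₁.length
        · rw [word_entry_a hw₁ q hq3, word_entry_a hw₃ q hq3]
        · exact word_entry_eq hw₁ hw₃ q hq3
            (fun hh => hq1 (Fin.ext (hh.trans hvl2.symm)))
            (fun hh => hq2 (Fin.ext (hh.trans hvr2.symm)))
  have hsw2' : wswap s₂ w₃ = w₁ := by
    funext q
    show w₃ (Equiv.swap (posl s₂) (posr s₂) q) = w₁ q
    by_cases hq1 : q = posl s₂
    · rw [hq1, Equiv.swap_apply_left, w3c, word_entry_b hw₁ _ hvl2]
    · by_cases hq2 : q = posr s₂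
      · rw [hq2, Equiv.swap_apply_right, w3b2, word_entry_c hw₁ _ hvr2]
      · rw [Equiv.swap_apply_of_ne_of_ne hq1 hq2]
        by_cases hq3 : q.1 = k₁.length
        · rw [word_entry_a hw₃ q hq3, word_entry_a hw₁ q hq3]
        · exact word_entry_eq hw₃ hw₁ q hq3
            (fun hh => hq1 (Fin.ext (hh.trans hvl2.symm)))
            (fun hh => hq2 (Fin.ext (hh.trans hvr2.symm)))
  have hsw22 : wswap s₂ w₂ = w₂ := by
    funext q
    show w₂ (Equiv.swap (posl s₂) (posr s₂) q) = w₂ q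
    by_cases hq1 : q = posl s₂
    · rw [hq1, Equiv.swap_apply_left, w2c, w2b2]
    · by_cases hq2 : q = posr s₂
      · rw [hq2, Equiv.swap_apply_right, w2b2, w2c]
      · rw [Equiv.swap_apply_of_ne_of_ne hq1 hq2]
  have hsw13 : wswap s₁ w₃ = w₃ := by
    funext q
    show w₃ (Equiv.swap (posl s₁) (posr s₁) q) = w₃ q
    by_cases hq1 : q = posl s₁
    · rw [hq1, Equiv.swap_apply_left, w3b, w3a]
    · by_cases hq2 : q = posr s₁
      · rw [hq2, Equiv.swap_apply_right, w3a, w3b]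
      · rw [Equiv.swap_apply_of_ne_of_ne hq1 hq2]
  refine serre_core M w₁ w₂ w₃ (Tg α s₁) (Tg α s₂)
    (Xg α (posl s₁)) (Xg α (posr s₁)) (Xg α (posr s₂))
    ?_ ?_ ?_ ?_ ?_ ?_ ?_ ?_ ?_ ?_ ?_ ?_ ?_ ?_ ?_ ?_ ?_ ?_ ?_ ?_ ?_ ?_ ?_ ?_ ?_ ?_ ?_ ?_
  · -- b1
    have h := mkq (α := α) (KLRRel.te s₁ w₁)
    rw [hsw1] at h
    simpa only [map_mul, Tg, Ew, Xg] using h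
  · -- b2
    have h := mkq (α := α) (KLRRel.te s₁ w₂)
    rw [hsw1'] at h
    simpa only [map_mul, Tg, Ew, Xg] using h
  · -- b3
    have h := mkq (α := α) (KLRRel.te s₁ w₃)
    rw [hsw13] at h
    simpa only [map_mul, Tg, Ew, Xg] using h
  · -- b4
    have h := mkq (α := α) (KLRRel.te s₂ w₁)
    rw [hsw2] at h
    simpa only [map_mul, Tg, Ew, Xg] using h
  · -- b5
    have h := mkq (α := α) (KLRRel.te s₂ w₃)
    rw [hsw2'] at h
    simpa only [map_mul, Tg, Ew, Xg] using h
  · -- b6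
    have h := mkq (α := α) (KLRRel.te s₂ w₂)
    rw [hsw22] at h
    simpa only [map_mul, Tg, Ew, Xg] using h
  · -- xP
    intro w
    simpa only [map_mul, Tg, Ew, Xg] using mkq (α := α) (KLRRel.xe (posl s₁) w)
  · -- xQ
    intro w
    simpa only [map_mul, Tg, Ew, Xg] using mkq (α := α) (KLRRel.xe (posr s₁) w)
  · -- xR
    intro w
    simpa only [map_mul, Tg, Ew, Xg] using mkq (α := α) (KLRRel.xe (posr s₂) w)
  · -- c1
    have h := mkq (α := α) (KLRRel.tsq s₁ w₁)
    rw [w1a, w1b, if_neg hne, if_neg (by rw [cij]; decide)] at h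
    simpa only [map_mul, map_add, Tg, Ew, Xg] using h
  · -- c2
    have h := mkq (α := α) (KLRRel.tsq s₂ w₁)
    rw [w1b2, w1c, if_neg hne', if_neg (by rw [cji]; decide)] at h
    simp only [map_mul, map_add] at h
    exact h
  · -- c3
    have h := mkq (α := α) (KLRRel.tsq s₁ w₂)
    rw [w2a, w2b, if_neg hne', if_neg (by rw [cji]; decide)] at h
    simpa only [map_mul, map_add, Tg, Ew, Xg] using h
  · -- c4
    have h := mkq (α := α) (KLRRel.tsq s₂ w₂)
    rw [w2b2, w2c, if_pos rfl] at h
    simpa only [map_mul, map_zero, Tg, Ew, Xg] using h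
  · -- c5
    have h := mkq (α := α) (KLRRel.tsq s₁ w₃)
    rw [w3a, w3b, if_pos rfl] at h
    simpa only [map_mul, map_zero, Tg, Ew, Xg] using h
  · -- c6
    have h := mkq (α := α) (KLRRel.tsq s₂ w₃)
    rw [w3b2, w3c, if_neg hne, if_neg (by rw [cij]; decide)] at h
    simp only [map_mul, map_add] at h
    exact h
  · -- d1
    have h := mkq (α := α) (KLRRel.braid s₁ s₂ rfl w₁)
    rw [w1a, w1c, w1b, if_pos ⟨rfl, cij⟩] at h
    simp only [map_mul, map_sub] at h
    rw [sub_mul, sub_eq_iff_eq_add] at h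
    exact h
  · -- d2
    have h := mkq (α := α) (KLRRel.braid s₁ s₂ rfl w₂)
    rw [w2a, w2c, w2b, if_neg (fun hc => hne' hc.1)] at h
    simp only [map_mul, map_sub, map_zero] at h
    rw [sub_mul, sub_eq_zero] at h
    exact h
  · -- d3
    have h := mkq (α := α) (KLRRel.braid s₁ s₂ rfl w₃)
    rw [w3a, w3c, w3b, if_neg (fun hc => hne hc.1)] at h
    simp only [map_mul, map_sub, map_zero] at h
    rw [sub_mul, sub_eq_zero] at h
    exact h
  · -- e1b
    have h := mkq (α := α) (KLRRel.txk s₁ (posr s₁) w₁)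
    rw [Equiv.swap_apply_right, w1a, w1b,
      if_neg (fun hc => hne hc.2), if_neg (fun hc => hne hc.2)] at h
    simp only [map_mul, map_sub, map_zero] at h
    rw [sub_mul, sub_eq_zero] at h
    exact h
  · -- e1c
    have h := mkq (α := α) (KLRRel.txk s₁ (posr s₂) w₁)
    rw [Equiv.swap_apply_of_ne_of_ne ne_r_p ne_r_q,
      if_neg (fun hc => ne_r_p hc.1), if_neg (fun hc => ne_r_q hc.1)] at h
    simp only [map_mul, map_sub, map_zero] at h
    rw [sub_mul, sub_eq_zero] at h
    exact h
  · -- e1d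
    have h := mkq (α := α) (KLRRel.txk s₂ (posl s₂) w₁)
    rw [Equiv.swap_apply_left, w1b2, w1c,
      if_neg (fun hc => hne' hc.2), if_neg (fun hc => hne' hc.2)] at h
    simp only [map_mul, map_sub, map_zero] at h
    rw [sub_mul, sub_eq_zero] at h
    exact h
  · -- e1f
    have h := mkq (α := α) (KLRRel.txk s₂ (posl s₁) w₁)
    rw [Equiv.swap_apply_of_ne_of_ne ne_p_lq ne_p_r,
      if_neg (fun hc => ne_p_lq hc.1), if_neg (fun hc => ne_p_r hc.1)] at h
    simp only [map_mul, map_sub, map_zero] at h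
    rw [sub_mul, sub_eq_zero] at h
    exact h
  · -- e2a
    have h := mkq (α := α) (KLRRel.txk s₂ (posl s₂) w₂)
    rw [Equiv.swap_apply_left, w2b2, w2c, if_pos ⟨rfl, rfl⟩] at h
    simp only [map_mul, map_sub] at h
    rw [sub_mul, sub_eq_iff_eq_add] at h
    exact h
  · -- e2b
    have h := mkq (α := α) (KLRRel.txk s₂ (posr s₂) w₂)
    rw [Equiv.swap_apply_right, w2b2, w2c,
      if_neg (fun hc => ne_r_lq hc.1), if_pos ⟨rfl, rfl⟩] at h
    simp only [map_mul, map_sub, map_neg] at h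
    rw [sub_mul, sub_eq_iff_eq_add, neg_add_eq_sub] at h
    exact h
  · -- e2c
    have h := mkq (α := α) (KLRRel.txk s₂ (posl s₁) w₂)
    rw [Equiv.swap_apply_of_ne_of_ne ne_p_lq ne_p_r,
      if_neg (fun hc => ne_p_lq hc.1), if_neg (fun hc => ne_p_r hc.1)] at h
    simp only [map_mul, map_sub, map_zero] at h
    rw [sub_mul, sub_eq_zero] at h
    exact h
  · -- e3a
    have h := mkq (α := α) (KLRRel.txk s₁ (posl s₁) w₃)
    rw [Equiv.swap_apply_left, w3a, w3b, if_pos ⟨rfl, rfl⟩] at h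
    simp only [map_mul, map_sub] at h
    rw [sub_mul, sub_eq_iff_eq_add] at h
    exact h
  · -- e3b
    have h := mkq (α := α) (KLRRel.txk s₁ (posr s₁) w₃)
    rw [Equiv.swap_apply_right, w3a, w3b,
      if_neg (fun hc => ne_q_p hc.1), if_pos ⟨rfl, rfl⟩] at h
    simp only [map_mul, map_sub, map_neg] at h
    rw [sub_mul, sub_eq_iff_eq_add, neg_add_eq_sub] at h
    exact h
  · -- e3c
    have h := mkq (α := α) (KLRRel.txk s₁ (posr s₂) w₃)
    rw [Equiv.swap_apply_of_ne_of_ne ne_r_p ne_r_q,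
      if_neg (fun hc => ne_r_p hc.1), if_neg (fun hc => ne_r_q hc.1)] at h
    simp only [map_mul, map_sub, map_zero] at h
    rw [sub_mul, sub_eq_zero] at h
    exact h
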